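/- (Gauss quadrature.) Let a < b be reals, let w : [a,b] → ℝ be a nonnegative integrable weight function, and let q_n be a real polynomial of degree n such that ∫_a^b p(x) q_n(x) w(x) dx = 0 for every real polynomial p of degree less than n. Suppose q_n has n distinct real roots η_1 < ⋯ < η_n, all lying in [a,b], and suppose a_1,…,a_n are real numbers such that Σ_{i=1}^{n} a_i f(η_i) = ∫_a^b f(x) w(x) dx for every real polynomial f of degree less than n. Then Σ_{i=1}^{n} a_i f(η_i) = ∫_a^b f(x) w(x) dx for every real polynomial f of degree less than 2n. -/

import Mathlib

open Polynomial MeasureTheory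

/-- Gauss quadrature: if `q` is a degree-`n` polynomial orthogonal (w.r.t. the weight `w` on
`[a,b]`) to all polynomials of degree `< n`, whose `n` distinct roots `η_1 < ⋯ < η_n` lie in
`[a,b]`, and if the weights `a_i` make the quadrature rule exact for polynomials of degree
`< n`, then the rule is exact for all polynomials of degree `< 2n`. -/
theorem stmt_14 (a b : ℝ) (hab : a < b) (w : ℝ → ℝ)
    (hw_nonneg : ∀ x ∈ Set.Icc a b, 0 ≤ w x)
    (hw_int : IntegrableOn w (Set.Icc a b))
    (n : ℕ) (q : Polynomial ℝ) (hq_deg : q.degree = (n : ℕ))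
    (hq_orth : ∀ p : Polynomial ℝ, p.natDegree < n →
      (∫ x in a..b, p.eval x * q.eval x * w x) = 0)
    (η : Fin n → ℝ) (hη_mono : StrictMono η) (hη_mem : ∀ i, η i ∈ Set.Icc a b)
    (hη_root : ∀ i, q.eval (η i) = 0)
    (c : Fin n → ℝ)
    (hc : ∀ f : Polynomial ℝ, f.natDegree < n →
      (∑ i, c i * f.eval (η i)) = ∫ x in a..b, f.eval x * w x) :
    ∀ f : Polynomial ℝ, f.natDegree < 2 * n →
      (∑ i, c i * f.eval (η i)) = ∫ x in a..b, f.eval x * w x := by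
  intro f hf
  rcases Nat.eq_zero_or_pos n with hn | hn
  · exact absurd hf (by omega)
  have hq0 : q ≠ 0 := fun h => by simp [h] at hq_deg
  have hlc : q.leadingCoeff ≠ 0 := leadingCoeff_ne_zero.mpr hq0
  set m : Polynomial ℝ := q * C q.leadingCoeff⁻¹ with hm
  have hmonic : m.Monic := monic_mul_leadingCoeff_inv hq0
  have hmdeg : m.degree = (n : ℕ) := by
    rw [hm, degree_mul, degree_C (inv_ne_zero hlc), hq_deg]; simp
  have hmnat : m.natDegree = n := natDegree_eq_of_degree_eq_some hmdeg
  set p := f /ₘ m with hp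
  set r := f %ₘ m with hr
  have hfdecomp : f = r + m * p := (modByMonic_add_div f m).symm
  have hr_deg : r.natDegree < n := by
    rcases eq_or_ne r 0 with h | h
    · simpa [h] using hn
    · have := degree_modByMonic_lt f hmonic
      rw [hmdeg] at this
      exact (natDegree_lt_iff_degree_lt h).mpr this
  have hp_deg : p.natDegree < n := by
    rw [hp, natDegree_divByMonic f hmonic, hmnat]; omega
  have hmη : ∀ i, m.eval (η i) = 0 := by intro i; simp [hm, hη_root i]
  have hint : ∀ g : Polynomial ℝ, IntervalIntegrable (fun x => g.eval x * w x) volume a b := by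
    intro g
    rw [intervalIntegrable_iff]
    apply (hw_int.continuousOn_mul g.continuous.continuousOn isCompact_Icc).mono_set
    rw [Set.uIoc_of_le hab.le]; exact Set.Ioc_subset_Icc_self
  have key : (∫ x in a..b, f.eval x * w x) = ∫ x in a..b, r.eval x * w x := by
    have heq : (fun x => f.eval x * w x)
        = fun x => r.eval x * w x + (C q.leadingCoeff⁻¹ * p * q).eval x * w x := by
      funext x
      conv_lhs => rw [hfdecomp]
      simp [hm]; ring
    rw [heq, intervalIntegral.integral_add (hint r) (hint (C q.leadingCoeff⁻¹ * p * q))]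
    have h2 : (∫ x in a..b, (C q.leadingCoeff⁻¹ * p * q).eval x * w x) = 0 := by
      have heq2 : (fun x => (C q.leadingCoeff⁻¹ * p * q).eval x * w x)
          = fun x => q.leadingCoeff⁻¹ * (p.eval x * q.eval x * w x) := by
        funext x; simp; ring
      rw [heq2, intervalIntegral.integral_const_mul, hq_orth p hp_deg, mul_zero]
    rw [h2, add_zero]
  have hsum : (∑ i, c i * f.eval (η i)) = ∑ i, c i * r.eval (η i) := by
    apply Finset.sum_congr rfl
    intro i _
    conv_lhs => rw [hfdecomp]
    simp [hmη i]
  rw [hsum, hc r hr_deg, key]
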